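/- For every positive integer m, the identity (q;q)_{m-1} = Σ_{i≥0} q^{mi} (q^{i+1};q)_∞ holds in the ring ℤ[[q]] of formal power series, where the sum on the right converges q-adically. -/

import Mathlib

/-- The finite q-Pochhammer symbol `(q;q)_m = ∏_{i=1}^{m} (1 - q^i)` as a polynomial in `ℤ[q]`. -/
noncomputable def qPoch (m : ℕ) : Polynomial ℤ :=
  ∏ i ∈ Finset.range m, (1 - Polynomial.X ^ (i + 1))

/-- The infinite product `(q^a;q)_∞ = ∏_{i ≥ 0} (1 - q^{a+i})` in `ℤ[[q]]` (for `a ≥ 1`),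
defined coefficientwise via sufficiently large partial products. -/
noncomputable def pochInf (a : ℕ) : PowerSeries ℤ :=
  PowerSeries.mk fun n =>
    (∏ i ∈ Finset.range (n + 1), (1 - Polynomial.X ^ (a + i)) : Polynomial ℤ).coeff n

open Polynomial Finset

/-- partial product `∏_{j=a}^{B-1} (1 - X^j)` -/
noncomputable def RR (B a : ℕ) : Polynomial ℤ := ∏ j ∈ Finset.Ico a B, (1 - X ^ j)

lemma RR_succ {B a : ℕ} (h : a < B) : RR B a = (1 - X ^ a) * RR B (a + 1) := by
  unfold RR
  exact Finset.prod_eq_prod_Ico_succ_bot h _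

/-- multiplying by factors `(1 - X^j)` with `j > d` does not change the coefficient of `X^d`. -/
lemma coeff_mul_prod_one_sub (d : ℕ) (P : Polynomial ℤ) (s : Finset ℕ)
    (h : ∀ j ∈ s, d < j) :
    (P * ∏ j ∈ s, (1 - X ^ j)).coeff d = P.coeff d := by
  induction s using Finset.induction generalizing P with
  | empty => simp
  | @insert a s ha ih =>
      rw [Finset.prod_insert ha, show P * ((1 - X ^ a) * ∏ j ∈ s, (1 - X ^ j))
        = (P * (1 - X ^ a)) * ∏ j ∈ s, (1 - X ^ j) by ring,
        ih (P * (1 - X ^ a)) (fun j hj => h j (Finset.mem_insert_of_mem hj)), mul_sub, mul_one,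
        Polynomial.coeff_sub, Polynomial.coeff_mul_X_pow',
        if_neg (by exact Nat.not_le.2 (h a (Finset.mem_insert_self a s))), sub_zero]

lemma coeff_RR_mono (d a : ℕ) {B B' : ℕ} (hBB' : B ≤ B') (hdB : d < B) (haB : a ≤ B) :
    (RR B' a).coeff d = (RR B a).coeff d := by
  unfold RR
  rw [← Finset.prod_Ico_consecutive _ haB hBB', coeff_mul_prod_one_sub]
  intro j hj
  exact lt_of_lt_of_le hdB (Finset.mem_Ico.1 hj).1

lemma coeff_RR_stable (d a : ℕ) {B B' : ℕ} (hdB : d < B) (haB : a ≤ B)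
    (hdB' : d < B') (haB' : a ≤ B') :
    (RR B a).coeff d = (RR B' a).coeff d := by
  rcases le_total B B' with h | h
  · rw [coeff_RR_mono d a h hdB haB]
  · rw [coeff_RR_mono d a h hdB' haB']

/-- Abel-summation / telescoping step. -/
lemma step (B k : ℕ) : ∀ N, N + 1 ≤ B →
    ∑ i ∈ Finset.range (N + 1), X ^ ((k + 1) * i) * RR B (i + 1)
      = X ^ (k * N) * RR B (N + 1)
        + (1 - X ^ k) * ∑ i ∈ Finset.range N, (X : Polynomial ℤ) ^ (k * i) * RR B (i + 1) := by
  intro N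
  induction N with
  | zero => simp
  | succ N ih =>
      intro hB
      rw [Finset.sum_range_succ, ih (by omega), Finset.sum_range_succ,
        RR_succ (show N + 1 < B by omega)]
      ring

lemma one_sub_prod_dvd (c : ℕ) (f : ℕ → Polynomial ℤ) (s : Finset ℕ)
    (h : ∀ j ∈ s, (X : Polynomial ℤ) ^ c ∣ (1 - f j)) :
    (X : Polynomial ℤ) ^ c ∣ 1 - ∏ j ∈ s, f j := by
  induction s using Finset.induction with
  | empty => simp
  | @insert a s ha ih =>
      rw [Finset.prod_insert ha,
        show (1 : Polynomial ℤ) - f a * ∏ j ∈ s, f j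
          = (1 - f a) * ∏ j ∈ s, f j + (1 - ∏ j ∈ s, f j) by ring]
      exact dvd_add (Dvd.dvd.mul_right (h a (Finset.mem_insert_self a s)) _)
        (ih (fun j hj => h j (Finset.mem_insert_of_mem hj)))

/-- The key congruence: `(q;q)_m ≡ ∑_{i=0}^{N} q^{(m+1)i} (q^{i+1};q)_{<B}  (mod q^{n+1})`. -/
lemma key (n : ℕ) : ∀ m N B, n + m + 1 ≤ N + 1 → N + 1 ≤ B →
    (X : Polynomial ℤ) ^ (n + 1) ∣
      qPoch m - ∑ i ∈ Finset.range (N + 1), X ^ ((m + 1) * i) * RR B (i + 1) := by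
  intro m
  induction m with
  | zero =>
      intro N B hN hB
      rw [step B 0 N hB]
      simp only [qPoch, Finset.range_zero, Finset.prod_empty, Nat.zero_add, pow_zero,
        one_mul, sub_self, zero_mul, add_zero]
      apply one_sub_prod_dvd
      intro j hj
      rw [show (1 : Polynomial ℤ) - (1 - X ^ j) = X ^ j by ring]
      exact pow_dvd_pow X (by have := (Finset.mem_Ico.1 hj).1; omega)
  | succ m ih =>
      intro N B hN hB
      obtain ⟨N', rfl⟩ : ∃ N', N = N' + 1 := ⟨N - 1, by omega⟩
      rw [step B (m + 1) (N' + 1) hB]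
      have hq : qPoch (m + 1) = qPoch m * (1 - X ^ (m + 1)) := by
        unfold qPoch
        rw [Finset.prod_range_succ]
      have h1 := ih N' B (by omega) (by omega)
      have h2 : (X : Polynomial ℤ) ^ (n + 1) ∣ X ^ ((m + 1) * (N' + 1)) :=
        pow_dvd_pow X (by nlinarith)
      have := dvd_sub (Dvd.dvd.mul_left h1 (1 - X ^ (m + 1)))
        (Dvd.dvd.mul_right h2 (RR B (N' + 1 + 1)))
      rw [hq]
      convert this using 1
      ring

theorem qPoch_as_qadic_sum (m : ℕ) (hm : 1 ≤ m) :
    ∀ n : ℕ, PowerSeries.coeff n ((qPoch (m - 1) : Polynomial ℤ) : PowerSeries ℤ) =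
      ∑ i ∈ Finset.range (n + 1),
        PowerSeries.coeff n ((PowerSeries.X : PowerSeries ℤ) ^ (m * i) * pochInf (i + 1)) := by
  intro n
  obtain ⟨m', rfl⟩ : ∃ m', m = m' + 1 := ⟨m - 1, by omega⟩
  set N : ℕ := n + m' + 1 with hNdef
  set B : ℕ := N + 1 with hBdef
  have hkey := key n m' N B (by omega) (by omega)
  rw [Polynomial.X_pow_dvd_iff] at hkey
  have hcoeff := hkey n (by omega)
  rw [Polynomial.coeff_sub, sub_eq_zero] at hcoeff
  rw [Polynomial.coeff_coe, Nat.add_sub_cancel, hcoeff]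
  -- restrict the sum from `range (N+1)` to `range (n+1)`
  rw [Polynomial.finset_sum_coeff]
  rw [← Finset.sum_subset (Finset.range_subset_range.2 (show n + 1 ≤ N + 1 by omega))
      (f := fun i => ((X : Polynomial ℤ) ^ ((m' + 1) * i) * RR B (i + 1)).coeff n)]
  · -- termwise equality on `range (n+1)`
    apply Finset.sum_congr rfl
    intro i hi
    have hi' : i ≤ n := by have := Finset.mem_range.1 hi; omega
    rw [mul_comm ((X : Polynomial ℤ) ^ ((m' + 1) * i)) _,
      Polynomial.coeff_mul_X_pow',
      mul_comm ((PowerSeries.X : PowerSeries ℤ) ^ ((m' + 1) * i)) _,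
      PowerSeries.coeff_mul_X_pow']
    by_cases hc : (m' + 1) * i ≤ n
    · rw [if_pos hc, if_pos hc]
      set d : ℕ := n - (m' + 1) * i with hd
      have hdn : d ≤ n := Nat.sub_le _ _
      rw [pochInf, PowerSeries.coeff_mk]
      have hprod : (∏ j ∈ Finset.range (d + 1), (1 - (X : Polynomial ℤ) ^ (i + 1 + j)))
          = RR (i + 1 + (d + 1)) (i + 1) := by
        rw [RR, Finset.prod_Ico_eq_prod_range]
        simp
      rw [hprod]
      exact (coeff_RR_stable d (i + 1) (by omega) (by omega) (by omega) (by omega)).symm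
    · rw [if_neg hc, if_neg hc]
  · -- terms with `n < i ≤ N` vanish
    intro i hiN hin
    have h1 : n + 1 ≤ i := by
      by_contra h
      exact hin (Finset.mem_range.2 (by omega))
    rw [mul_comm, Polynomial.coeff_mul_X_pow', if_neg (by push_neg; nlinarith)]
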